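/- arXiv:1608.01805 — 3 statements merged into one kernel-verified Lean document; each statement's English description precedes it below -/
import Mathlib

section
/- Let ξ be independent of Z ~ N(0,1), ξ ≥ 0 with E ξ = 1, and X = √ξ · Z. Then E X = 0, E X² = 1, and E e^{tX} = E e^{ξ t²/2} for all real t. Moreover, E e^{tX} < e^{t²} for all t ≠ 0 if and only if P(ξ ≤ 2) = 1 and P(ξ = 2) < 1. -/
open MeasureTheory ProbabilityTheory

namespace GMaux

open Real

lemma pdf_eq (x : ℝ) : gaussianPDFReal 0 1 x = (Real.sqrt (2*π))⁻¹ * rexp (-(2⁻¹) * x^2) := by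
  simp only [gaussianPDFReal, NNReal.coe_one, mul_one, sub_zero]
  congr 1
  ring

lemma gauss_eq : gaussianReal 0 1 = volume.withDensity (gaussianPDF 0 1) :=
  gaussianReal_of_var_ne_zero 0 one_ne_zero

lemma sqrt2pi_pos : 0 < Real.sqrt (2*π) := Real.sqrt_pos.mpr (by positivity)

lemma integral_gauss_half : ∫ x : ℝ, rexp (-(2⁻¹) * x^2) = Real.sqrt (2*π) := by
  rw [integral_gaussian]
  congr 1
  ring

lemma exp_shift_eq (s : ℝ) : (fun x : ℝ => rexp (s*x) * gaussianPDFReal 0 1 x)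
    = fun x => ((Real.sqrt (2*π))⁻¹ * rexp (s^2/2)) * rexp (-(2⁻¹) * (x - s)^2) := by
  funext x
  rw [pdf_eq, mul_comm (rexp (s*x)), mul_assoc, mul_assoc, ← Real.exp_add, ← Real.exp_add]
  congr 2
  ring

lemma integrable_exp_mul_pdf (s : ℝ) :
    Integrable (fun x : ℝ => rexp (s*x) * gaussianPDFReal 0 1 x) := by
  rw [exp_shift_eq]
  exact ((integrable_exp_neg_mul_sq (by norm_num : (0:ℝ) < 2⁻¹)).comp_sub_right s).const_mul _

lemma integral_exp_mul_pdf (s : ℝ) :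
    ∫ x : ℝ, rexp (s*x) * gaussianPDFReal 0 1 x = rexp (s^2/2) := by
  rw [exp_shift_eq, integral_const_mul,
    integral_sub_right_eq_self (fun x => rexp (-(2⁻¹) * x^2)) s, integral_gauss_half]
  have h : Real.sqrt (2*π) ≠ 0 := ne_of_gt sqrt2pi_pos
  field_simp

lemma lintegral_exp_gauss (s : ℝ) :
    ∫⁻ x, ENNReal.ofReal (rexp (s * x)) ∂(gaussianReal 0 1) = ENNReal.ofReal (rexp (s^2/2)) := by
  rw [gauss_eq, lintegral_withDensity_eq_lintegral_mul _ (measurable_gaussianPDF 0 1)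
    (show Measurable fun x : ℝ => ENNReal.ofReal (rexp (s * x)) by fun_prop)]
  have h : ∀ x : ℝ, (gaussianPDF 0 1 * fun x => ENNReal.ofReal (rexp (s*x))) x
      = ENNReal.ofReal (rexp (s*x) * gaussianPDFReal 0 1 x) := by
    intro x
    simp only [Pi.mul_apply, gaussianPDF]
    rw [mul_comm, ← ENNReal.ofReal_mul (by positivity)]
  simp_rw [h]
  rw [← ofReal_integral_eq_lintegral_ofReal (integrable_exp_mul_pdf s)
      (Filter.Eventually.of_forall fun x =>
        mul_nonneg (Real.exp_nonneg _) (gaussianPDFReal_nonneg 0 1 x)),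
    integral_exp_mul_pdf s]

lemma integral_gauss_eq (g : ℝ → ℝ) :
    ∫ x, g x ∂(gaussianReal 0 1) = ∫ x, gaussianPDFReal 0 1 x * g x := by
  rw [gauss_eq,
    show gaussianPDF 0 1 = (fun x => ((Real.toNNReal (gaussianPDFReal 0 1 x) : NNReal) : ENNReal))
      from rfl,
    integral_withDensity_eq_integral_smul (measurable_gaussianPDFReal 0 1).real_toNNReal g]
  congr 1
  funext x
  rw [NNReal.smul_def, Real.coe_toNNReal _ (gaussianPDFReal_nonneg 0 1 x), smul_eq_mul]

lemma integral_odd_zero (f : ℝ → ℝ) (hodd : ∀ x, f (-x) = - f x) : ∫ x : ℝ, f x = 0 := by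
  have hmp : MeasurePreserving (fun x : ℝ => -x) volume volume :=
    ⟨measurable_neg, Measure.map_neg_eq_self volume⟩
  have he : MeasurableEmbedding (fun x : ℝ => -x) :=
    (Homeomorph.neg ℝ).measurableEmbedding
  have h := hmp.integral_comp he f
  simp_rw [hodd] at h
  rw [integral_neg] at h
  linarith

lemma integral_id_gauss : ∫ x, x ∂(gaussianReal 0 1) = 0 := by
  rw [show (fun x : ℝ => x) = (fun x : ℝ => id x) from rfl, integral_gauss_eq]
  refine integral_odd_zero _ fun x => ?_
  rw [pdf_eq, pdf_eq, neg_sq]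
  simp only [id]
  ring

lemma integral_sq_Ioi : ∫ x in Set.Ioi (0:ℝ), x^2 * rexp (-(2⁻¹)*x^2)
    = Real.sqrt (2*π) / 2 := by
  have h : ∫ x in Set.Ioi (0:ℝ), x^2 * rexp (-(2⁻¹)*x^2)
      = ∫ x in Set.Ioi (0:ℝ), x ^ (2:ℝ) * rexp (-(2⁻¹) * x ^ (2:ℝ)) := by
    refine setIntegral_congr_fun measurableSet_Ioi (fun x _ => ?_)
    rw [show ((2:ℝ)) = ((2:ℕ):ℝ) by norm_num, Real.rpow_natCast]
    try norm_num
  rw [h, integral_rpow_mul_exp_neg_mul_rpow (by norm_num) (by norm_num) (by norm_num)]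
  have h32 : (((2:ℝ)+1)/2 : ℝ) = 1/2 + 1 := by norm_num
  rw [h32, Real.Gamma_add_one (by norm_num), Real.Gamma_one_half_eq]
  have hrp : ((2:ℝ)⁻¹) ^ (-((2:ℝ)+1)/2 : ℝ) = (2:ℝ) ^ ((3:ℝ)/2) := by
    rw [Real.inv_rpow (by norm_num : (0:ℝ) ≤ 2), ← Real.rpow_neg (by norm_num : (0:ℝ) ≤ 2)]
    norm_num
  rw [hrp, show ((3:ℝ)/2) = 1 + 1/2 by norm_num,
    Real.rpow_add (by norm_num : (0:ℝ) < 2), Real.rpow_one, ← Real.sqrt_eq_rpow,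
    Real.sqrt_mul (by norm_num : (0:ℝ) ≤ 2) π]
  ring

lemma integral_sq_exp : ∫ x : ℝ, x^2 * rexp (-(2⁻¹) * x^2) = Real.sqrt (2*π) := by
  have h : ∀ x : ℝ, x^2 * rexp (-(2⁻¹) * x^2)
      = (fun y : ℝ => y^2 * rexp (-(2⁻¹)*y^2)) |x| := by
    intro x; simp [sq_abs]
  calc ∫ x : ℝ, x^2 * rexp (-(2⁻¹) * x^2)
      = ∫ x : ℝ, (fun y : ℝ => y^2 * rexp (-(2⁻¹)*y^2)) |x| := by
        congr 1; funext x; simp [sq_abs]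
    _ = 2 * ∫ x in Set.Ioi (0:ℝ), x^2 * rexp (-(2⁻¹)*x^2) :=
        integral_comp_abs (f := fun y : ℝ => y^2 * rexp (-(2⁻¹)*y^2))
    _ = Real.sqrt (2*π) := by rw [integral_sq_Ioi]; ring

lemma integrable_sq_exp : Integrable (fun x : ℝ => x^2 * rexp (-(2⁻¹) * x^2)) := by
  refine ((integrable_exp_neg_mul_sq (by norm_num : (0:ℝ) < 4⁻¹)).const_mul 4).mono'
    ((measurable_id.pow_const 2).mul
      (((measurable_id.pow_const 2).const_mul (-(2⁻¹))).exp)).aestronglyMeasurable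
    (Filter.Eventually.of_forall fun x => ?_)
  have h1 : x^2 ≤ 4 * rexp (4⁻¹ * x^2) := by
    nlinarith [Real.add_one_le_exp (4⁻¹ * x^2)]
  have h4 : rexp (4⁻¹*x^2) * rexp (-(2⁻¹)*x^2) = rexp (-(4⁻¹)*x^2) := by
    rw [← Real.exp_add]; congr 1; ring
  rw [Real.norm_of_nonneg (by positivity)]
  calc x^2 * rexp (-(2⁻¹)*x^2) ≤ 4 * rexp (4⁻¹*x^2) * rexp (-(2⁻¹)*x^2) :=
        mul_le_mul_of_nonneg_right h1 (Real.exp_nonneg _)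
    _ = 4 * rexp (-(4⁻¹)*x^2) := by rw [mul_assoc, h4]

lemma pdf_toReal (x : ℝ) : (gaussianPDF 0 1 x).toReal = gaussianPDFReal 0 1 x := by
  rw [gaussianPDF, ENNReal.toReal_ofReal (gaussianPDFReal_nonneg 0 1 x)]

lemma integrable_id_gauss : Integrable (fun x : ℝ => x) (gaussianReal 0 1) := by
  rw [gauss_eq, integrable_withDensity_iff (measurable_gaussianPDF 0 1)
    (Filter.Eventually.of_forall fun x => ENNReal.ofReal_lt_top)]
  have h : ∀ x : ℝ, x * (gaussianPDF 0 1 x).toReal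
      = (Real.sqrt (2*π))⁻¹ * (x * rexp (-(2⁻¹)*x^2)) := by
    intro x; rw [pdf_toReal, pdf_eq]; ring
  simp_rw [h]
  exact (integrable_mul_exp_neg_mul_sq (by norm_num : (0:ℝ) < 2⁻¹)).const_mul _

lemma integrable_sq_gauss : Integrable (fun x : ℝ => x^2) (gaussianReal 0 1) := by
  rw [gauss_eq, integrable_withDensity_iff (measurable_gaussianPDF 0 1)
    (Filter.Eventually.of_forall fun x => ENNReal.ofReal_lt_top)]
  have h : ∀ x : ℝ, x^2 * (gaussianPDF 0 1 x).toReal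
      = (Real.sqrt (2*π))⁻¹ * (x^2 * rexp (-(2⁻¹)*x^2)) := by
    intro x; rw [pdf_toReal, pdf_eq]; ring
  simp_rw [h]
  exact integrable_sq_exp.const_mul _

lemma integral_sq_gauss : ∫ x, x^2 ∂(gaussianReal 0 1) = 1 := by
  rw [integral_gauss_eq]
  have h : ∀ x : ℝ, gaussianPDFReal 0 1 x * x^2
      = (Real.sqrt (2*π))⁻¹ * (x^2 * rexp (-(2⁻¹)*x^2)) := by
    intro x; rw [pdf_eq]; ring
  simp_rw [h]
  rw [integral_const_mul, integral_sq_exp, inv_mul_cancel₀ (ne_of_gt sqrt2pi_pos)]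

end GMaux

/-- For `X = √ξ · Z` with `ξ ≥ 0` independent of `Z ~ N(0,1)` and `E ξ = 1`:
`E X = 0`, `E X² = 1`, `E e^{tX} = E e^{ξ t²/2}` for all `t`, and
`E e^{tX} < e^{t²}` for all `t ≠ 0` iff `P(ξ ≤ 2) = 1` and `P(ξ = 2) < 1`. -/
theorem gaussian_mixture_subgaussian_characterization {Ω : Type*} [MeasureSpace Ω]
    [IsProbabilityMeasure (volume : Measure Ω)]
    (ξ Z : Ω → ℝ) (hξm : Measurable ξ) (hZm : Measurable Z)
    (hindep : IndepFun ξ Z)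
    (hZ : Measure.map Z volume = gaussianReal 0 1)
    (hξpos : ∀ ω, 0 ≤ ξ ω) (hξint : Integrable ξ) (hξmean : (∫ ω, ξ ω) = 1) :
    (∫ ω, Real.sqrt (ξ ω) * Z ω) = 0 ∧
    (∫ ω, (Real.sqrt (ξ ω) * Z ω) ^ 2) = 1 ∧
    (∀ t : ℝ, (∫⁻ ω, ENNReal.ofReal (Real.exp (t * (Real.sqrt (ξ ω) * Z ω))))
        = ∫⁻ ω, ENNReal.ofReal (Real.exp (ξ ω * t ^ 2 / 2))) ∧
    ((∀ t : ℝ, t ≠ 0 →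
        (∫⁻ ω, ENNReal.ofReal (Real.exp (t * (Real.sqrt (ξ ω) * Z ω))))
          < ENNReal.ofReal (Real.exp (t ^ 2)))
      ↔ (volume {ω | ξ ω ≤ 2} = 1 ∧ volume {ω | ξ ω = 2} < 1)) := by
  -- measurability facts
  have hS : MeasurableSet {ω | ξ ω ≤ 2} := hξm measurableSet_Iic
  have hS2 : MeasurableSet {ω | ξ ω = 2} := hξm (measurableSet_singleton 2)
  have key : ∀ s : Set Ω, MeasurableSet s → ((volume : Measure Ω) s = 1 ↔ ∀ᵐ ω, ω ∈ s) := by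
    intro s hs
    rw [← prob_compl_eq_zero_iff hs, ae_iff]
    exact Iff.rfl
  -- transfer of integrals along Z
  have hmapint : ∀ g : ℝ → ℝ, Measurable g → Integrable g (gaussianReal 0 1) →
      Integrable (fun ω => g (Z ω)) volume := by
    intro g hg hgint
    rw [← hZ] at hgint
    exact (integrable_map_measure hg.aestronglyMeasurable hZm.aemeasurable).mp hgint
  have hmapeq : ∀ g : ℝ → ℝ, Measurable g →
      (∫ ω, g (Z ω)) = ∫ x, g x ∂(gaussianReal 0 1) := by
    intro g hg
    rw [← hZ, integral_map hZm.aemeasurable hg.aestronglyMeasurable]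
  have hZint : Integrable Z volume := hmapint _ measurable_id GMaux.integrable_id_gauss
  have hEZ : (∫ ω, Z ω) = 0 := by
    have := hmapeq (fun x => x) measurable_id
    rw [this, GMaux.integral_id_gauss]
  have hZsqint : Integrable (fun ω => (Z ω)^2) volume :=
    hmapint _ (measurable_id.pow_const 2) GMaux.integrable_sq_gauss
  have hEZsq : (∫ ω, (Z ω)^2) = 1 := by
    have := hmapeq (fun x => x^2) (measurable_id.pow_const 2)
    rw [this, GMaux.integral_sq_gauss]
  -- part 1
  have hsqrtm : Measurable fun ω => Real.sqrt (ξ ω) := Real.continuous_sqrt.measurable.comp hξm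
  have hsqrtint : Integrable (fun ω => Real.sqrt (ξ ω)) volume := by
    refine ((integrable_const (1:ℝ)).add hξint).mono' hsqrtm.aestronglyMeasurable
      (Filter.Eventually.of_forall fun ω => ?_)
    simp only [Pi.add_apply]
    rw [Real.norm_of_nonneg (Real.sqrt_nonneg _)]
    nlinarith [Real.sq_sqrt (hξpos ω), Real.sqrt_nonneg (ξ ω)]
  have hindep1 : IndepFun (fun ω => Real.sqrt (ξ ω)) Z volume := by
    have := hindep.comp Real.continuous_sqrt.measurable (measurable_id : Measurable fun x : ℝ => x)
    exact this
  have part1 : (∫ ω, Real.sqrt (ξ ω) * Z ω) = 0 := by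
    have h := hindep1.integral_mul_eq_mul_integral hsqrtint.aestronglyMeasurable hZint.aestronglyMeasurable
    rw [show ((fun ω => Real.sqrt (ξ ω)) * Z) = fun ω => Real.sqrt (ξ ω) * Z ω from rfl] at h
    rw [h, hEZ, mul_zero]
  -- part 2
  have hindep2 : IndepFun ξ (fun ω => (Z ω)^2) volume := by
    have := hindep.comp (measurable_id : Measurable fun x : ℝ => x) (measurable_id.pow_const 2)
    exact this
  have part2 : (∫ ω, (Real.sqrt (ξ ω) * Z ω) ^ 2) = 1 := by
    have he : ∀ ω, (Real.sqrt (ξ ω) * Z ω)^2 = ξ ω * (Z ω)^2 := fun ω => by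
      rw [mul_pow, Real.sq_sqrt (hξpos ω)]
    simp_rw [he]
    have h := hindep2.integral_mul_eq_mul_integral hξint.aestronglyMeasurable hZsqint.aestronglyMeasurable
    rw [show (ξ * fun ω => (Z ω)^2) = fun ω => ξ ω * (Z ω)^2 from rfl] at h
    rw [h, hξmean, hEZsq, one_mul]
  -- part 3
  have hpair : Measure.map (fun ω => (ξ ω, Z ω)) volume
      = (Measure.map ξ volume).prod (gaussianReal 0 1) := by
    rw [← hZ]
    exact (indepFun_iff_map_prod_eq_prod_map_map hξm.aemeasurable hZm.aemeasurable).mp hindep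
  have part3 : ∀ t : ℝ, (∫⁻ ω, ENNReal.ofReal (Real.exp (t * (Real.sqrt (ξ ω) * Z ω))))
      = ∫⁻ ω, ENNReal.ofReal (Real.exp (ξ ω * t ^ 2 / 2)) := by
    intro t
    have hFm : Measurable (fun p : ℝ × ℝ => ENNReal.ofReal (Real.exp (t * (Real.sqrt p.1 * p.2)))) := by
      fun_prop
    have hGm : Measurable (fun x : ℝ => ENNReal.ofReal (Real.exp ((t * Real.sqrt x)^2/2))) := by
      fun_prop
    calc ∫⁻ ω, ENNReal.ofReal (Real.exp (t * (Real.sqrt (ξ ω) * Z ω)))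
        = ∫⁻ p, ENNReal.ofReal (Real.exp (t * (Real.sqrt p.1 * p.2)))
            ∂(Measure.map (fun ω => (ξ ω, Z ω)) volume) := by
          rw [lintegral_map hFm (hξm.prodMk hZm)]
      _ = ∫⁻ x, ∫⁻ z, ENNReal.ofReal (Real.exp (t * (Real.sqrt x * z)))
            ∂(gaussianReal 0 1) ∂(Measure.map ξ volume) := by
          rw [hpair, lintegral_prod _ hFm.aemeasurable]
      _ = ∫⁻ x, ENNReal.ofReal (Real.exp ((t * Real.sqrt x)^2/2)) ∂(Measure.map ξ volume) := by
          refine lintegral_congr fun x => ?_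
          have h := GMaux.lintegral_exp_gauss (t * Real.sqrt x)
          simp_rw [mul_assoc] at h
          exact h
      _ = ∫⁻ ω, ENNReal.ofReal (Real.exp ((t * Real.sqrt (ξ ω))^2/2)) := by
          rw [lintegral_map hGm hξm]
      _ = ∫⁻ ω, ENNReal.ofReal (Real.exp (ξ ω * t ^ 2 / 2)) := by
          refine lintegral_congr fun ω => ?_
          rw [mul_pow, Real.sq_sqrt (hξpos ω)]
          congr 2
          ring
  refine ⟨part1, part2, part3, ?_⟩
  -- part 4
  have hfm : ∀ t : ℝ, Measurable fun ω => ENNReal.ofReal (Real.exp (ξ ω * t^2/2)) := by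
    intro t; fun_prop
  constructor
  · intro h
    have h' : ∀ t : ℝ, t ≠ 0 → (∫⁻ ω, ENNReal.ofReal (Real.exp (ξ ω * t^2/2)))
        < ENNReal.ofReal (Real.exp (t^2)) := by
      intro t ht
      rw [← part3 t]
      exact h t ht
    constructor
    · by_contra hne
      have hA : (volume : Measure Ω) {ω | 2 < ξ ω} ≠ 0 := by
        intro h0
        apply hne
        rw [key _ hS, ae_iff]
        convert h0 using 2
        ext ω
        simp [not_le]
      have hsub : {ω | 2 < ξ ω} ⊆ ⋃ n : ℕ, {ω | 2 + (1:ℝ)/(n+1) ≤ ξ ω} := by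
        intro ω hω
        simp only [Set.mem_setOf_eq] at hω
        obtain ⟨n, hn⟩ := exists_nat_one_div_lt (show (0:ℝ) < ξ ω - 2 by linarith)
        exact Set.mem_iUnion.mpr ⟨n, by simp only [Set.mem_setOf_eq]; linarith⟩
      obtain ⟨n, hn⟩ : ∃ n : ℕ, (volume : Measure Ω) {ω | 2 + (1:ℝ)/(n+1) ≤ ξ ω} ≠ 0 := by
        by_contra hall
        push_neg at hall
        exact hA (le_antisymm
          (le_trans (measure_mono hsub) (le_of_eq (measure_iUnion_null hall))) zero_le)
      set ε : ℝ := 1/(n+1) with hε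
      have hεpos : 0 < ε := by positivity
      set δ := (volume : Measure Ω) {ω | 2 + ε ≤ ξ ω} with hδ
      have hδtop : δ ≠ ⊤ := measure_ne_top _ _
      set d := δ.toReal with hd
      have hdpos : 0 < d := ENNReal.toReal_pos hn hδtop
      set t := Real.sqrt (max 1 ((2/ε) * Real.log (1/d))) with htdef
      have htarg : (0:ℝ) ≤ max 1 ((2/ε) * Real.log (1/d)) :=
        le_trans zero_le_one (le_max_left _ _)
      have ht1 : (1:ℝ) ≤ t^2 := by
        rw [htdef, Real.sq_sqrt htarg]; exact le_max_left _ _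
      have htne : t ≠ 0 := by
        intro h0; rw [h0] at ht1; norm_num at ht1
      have ht2 : (2/ε) * Real.log (1/d) ≤ t^2 := by
        rw [htdef, Real.sq_sqrt htarg]; exact le_max_right _ _
      have hlog : Real.log (1/d) ≤ ε * t^2/2 := by
        calc Real.log (1/d) = (ε/2) * ((2/ε) * Real.log (1/d)) := by field_simp
          _ ≤ (ε/2) * t^2 := mul_le_mul_of_nonneg_left ht2 (by positivity)
          _ = ε * t^2/2 := by ring
      have hexp1 : 1/d ≤ Real.exp (ε * t^2/2) :=
        (Real.log_le_iff_le_exp (by positivity)).mp hlog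
      have hkey : Real.exp (t^2) ≤ Real.exp ((2+ε)*t^2/2) * d := by
        have h1 : 1 ≤ d * Real.exp (ε * t^2/2) := by
          rw [div_le_iff₀ hdpos] at hexp1
          linarith [hexp1]
        calc Real.exp (t^2) = Real.exp (t^2) * 1 := (mul_one _).symm
          _ ≤ Real.exp (t^2) * (d * Real.exp (ε * t^2/2)) :=
              mul_le_mul_of_nonneg_left h1 (Real.exp_nonneg _)
          _ = (Real.exp (t^2) * Real.exp (ε * t^2/2)) * d := by ring
          _ = Real.exp ((2+ε)*t^2/2) * d := by rw [← Real.exp_add]; congr 2; ring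
      have hlb : ENNReal.ofReal (Real.exp (t^2))
          ≤ ∫⁻ ω, ENNReal.ofReal (Real.exp (ξ ω * t^2/2)) := by
        calc ENNReal.ofReal (Real.exp (t^2))
            ≤ ENNReal.ofReal (Real.exp ((2+ε)*t^2/2) * d) := ENNReal.ofReal_le_ofReal hkey
          _ = ENNReal.ofReal (Real.exp ((2+ε)*t^2/2)) * δ := by
              rw [ENNReal.ofReal_mul (Real.exp_nonneg _), hd, ENNReal.ofReal_toReal hδtop]
          _ = ∫⁻ _ in {ω | 2 + ε ≤ ξ ω}, ENNReal.ofReal (Real.exp ((2+ε)*t^2/2)) := by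
              rw [setLIntegral_const]
          _ ≤ ∫⁻ ω in {ω | 2 + ε ≤ ξ ω}, ENNReal.ofReal (Real.exp (ξ ω * t^2/2)) := by
              refine setLIntegral_mono (hfm t) fun ω hω => ?_
              simp only [Set.mem_setOf_eq] at hω
              exact ENNReal.ofReal_le_ofReal (Real.exp_le_exp.mpr (by nlinarith [sq_nonneg t]))
          _ ≤ ∫⁻ ω, ENNReal.ofReal (Real.exp (ξ ω * t^2/2)) := setLIntegral_le_lintegral _ _
      exact absurd (h' t htne) (not_lt.mpr hlb)
    · rcases lt_or_ge ((volume : Measure Ω) {ω | ξ ω = 2}) 1 with hlt | hge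
      · exact hlt
      exfalso
      have h1 : (volume : Measure Ω) {ω | ξ ω = 2} = 1 := le_antisymm prob_le_one hge
      have hae : ∀ᵐ ω, ξ ω = 2 := (key _ hS2).mp h1
      have heq1 : (∫⁻ ω, ENNReal.ofReal (Real.exp (ξ ω * (1:ℝ)^2/2)))
          = ENNReal.ofReal (Real.exp ((1:ℝ)^2)) := by
        have hcongr : (fun ω => ENNReal.ofReal (Real.exp (ξ ω * (1:ℝ)^2/2)))
            =ᵐ[volume] (fun _ => ENNReal.ofReal (Real.exp ((1:ℝ)^2))) := by
          filter_upwards [hae] with ω hω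
          rw [hω]; norm_num
        rw [lintegral_congr_ae hcongr, lintegral_const, measure_univ, mul_one]
      have := h' 1 one_ne_zero
      rw [heq1] at this
      exact lt_irrefl _ this
  · rintro ⟨h2, h3⟩ t ht
    rw [part3 t]
    have haele : ∀ᵐ ω, ξ ω ≤ 2 := (key _ hS).mp h2
    have hle : (fun ω => ENNReal.ofReal (Real.exp (ξ ω * t^2/2)))
        ≤ᵐ[volume] fun _ => ENNReal.ofReal (Real.exp (t^2)) := by
      filter_upwards [haele] with ω hω
      exact ENNReal.ofReal_le_ofReal (Real.exp_le_exp.mpr (by nlinarith [sq_nonneg t]))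
    have hlec : (∫⁻ ω, ENNReal.ofReal (Real.exp (ξ ω * t^2/2)))
        ≤ ENNReal.ofReal (Real.exp (t^2)) := by
      calc (∫⁻ ω, ENNReal.ofReal (Real.exp (ξ ω * t^2/2)))
          ≤ ∫⁻ _ : Ω, ENNReal.ofReal (Real.exp (t^2)) := lintegral_mono_ae hle
        _ = ENNReal.ofReal (Real.exp (t^2)) := by
            rw [lintegral_const, measure_univ, mul_one]
    refine lt_of_le_of_ne hlec fun heq => ?_
    have hfin : (∫⁻ ω, ENNReal.ofReal (Real.exp (ξ ω * t^2/2))) ≠ ⊤ := by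
      rw [heq]; exact ENNReal.ofReal_ne_top
    have hsub0 : (∫⁻ ω, (ENNReal.ofReal (Real.exp (t^2))
        - ENNReal.ofReal (Real.exp (ξ ω * t^2/2)))) = 0 := by
      rw [lintegral_sub (hfm t) hfin hle, heq, lintegral_const, measure_univ, mul_one, tsub_self]
    have hge' := (lintegral_eq_zero_iff (measurable_const.sub (hfm t))).mp hsub0
    have haeeq : ∀ᵐ ω, ξ ω = 2 := by
      filter_upwards [hge', haele] with ω h1 h1'
      have h1'' : ENNReal.ofReal (Real.exp (t^2))
          ≤ ENNReal.ofReal (Real.exp (ξ ω * t^2/2)) := by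
        have : ENNReal.ofReal (Real.exp (t^2))
            - ENNReal.ofReal (Real.exp (ξ ω * t^2/2)) = 0 := h1
        exact tsub_eq_zero_iff_le.mp this
      have hre : Real.exp (t^2) ≤ Real.exp (ξ ω * t^2/2) :=
        (ENNReal.ofReal_le_ofReal_iff (Real.exp_nonneg _)).mp h1''
      have hexp := Real.exp_le_exp.mp hre
      have ht2ne : t^2 ≠ 0 := pow_ne_zero 2 ht
      have ht2pos : (0:ℝ) < t^2 := lt_of_le_of_ne (sq_nonneg t) (Ne.symm ht2ne)
      nlinarith
    have hone : (volume : Measure Ω) {ω | ξ ω = 2} = 1 := (key _ hS2).mpr haeeq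
    rw [hone] at h3
    exact lt_irrefl _ h3
end

section
/- For 0 < p < 1, q = 1 - p, p ≠ q, the inequality p e^{qt} + q e^{-pt} ≤ e^{σ² t²/2} holds for all real t with σ² = (p-q)/(2(log p - log q)), and equality holds at t₀ = -2(log p - log q). -/
open Real Set

private lemma sinh_div_mono {x y : ℝ} (hx : 0 ≤ x) (hxy : x ≤ y) :
    y * Real.sinh x ≤ x * Real.sinh y := by
  rcases eq_or_lt_of_le (hx.trans hxy) with hy | hy
  · have hy0 : y = 0 := hy.symm
    have hx0 : x = 0 := le_antisymm (hy0 ▸ hxy) hx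
    simp [hx0, hy0]
  · have hconv : ConvexOn ℝ (Set.Ici (0:ℝ)) Real.sinh := by
      apply convexOn_of_deriv2_nonneg (convex_Ici 0)
        Real.continuous_sinh.continuousOn
        Real.differentiable_sinh.differentiableOn
      · rw [Real.deriv_sinh]
        exact Real.differentiable_cosh.differentiableOn
      · intro x hx
        rw [interior_Ici, mem_Ioi] at hx
        have h2 : deriv^[2] Real.sinh x = Real.sinh x := by
          simp [Function.iterate_succ_apply', Real.deriv_sinh, Real.deriv_cosh]
        rw [h2]
        exact (Real.sinh_nonneg_iff.2 hx.le)
    have ha : (0:ℝ) ≤ 1 - x/y := by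
      rw [sub_nonneg]; exact div_le_one_of_le₀ hxy hy.le
    have hb : (0:ℝ) ≤ x/y := by positivity
    have hab : (1 - x/y) + x/y = 1 := by ring
    have h := hconv.2 (show (0:ℝ) ∈ Set.Ici (0:ℝ) from Set.self_mem_Ici)
      (show y ∈ Set.Ici (0:ℝ) from (hx.trans hxy)) ha hb hab
    rw [smul_eq_mul, smul_eq_mul, smul_eq_mul, smul_eq_mul, mul_zero, zero_add,
      div_mul_cancel₀ x hy.ne', Real.sinh_zero, mul_zero, zero_add] at h
    have h2 := mul_le_mul_of_nonneg_left h hy.le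
    have h3 : y * (x / y * Real.sinh y) = x * Real.sinh y := by field_simp
    linarith

private lemma tanh_mul_le {a b : ℝ} (ha : 0 ≤ a) (hab : a ≤ b) :
    a * Real.tanh b ≤ b * Real.tanh a := by
  have hca := Real.cosh_pos a
  have hcb := Real.cosh_pos b
  have key := sinh_div_mono (x := b - a) (y := b + a) (by linarith) (by linarith)
  rw [Real.sinh_sub, Real.sinh_add] at key
  rw [Real.tanh_eq_sinh_div_cosh, Real.tanh_eq_sinh_div_cosh, mul_div_assoc',
    mul_div_assoc', div_le_div_iff₀ hcb hca]
  nlinarith [key]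

private lemma core_nonneg {c : ℝ} (hc : 0 < c) {u : ℝ} (hu : 0 ≤ u) :
    Real.tanh c / (2*c) * c^2 - Real.log (Real.cosh c) ≤
    Real.tanh c / (2*c) * u^2 - Real.log (Real.cosh u) := by
  set k := Real.tanh c / (2*c) with hk
  set F : ℝ → ℝ := fun x => k*x^2 - Real.log (Real.cosh x) with hF
  have hder : ∀ x : ℝ, HasDerivAt F (2*k*x - Real.tanh x) x := by
    intro x
    have h1 : HasDerivAt (fun x : ℝ => k*x^2) (k*(2*x)) x := by
      simpa using (hasDerivAt_pow 2 x).const_mul k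
    have h2 : HasDerivAt (fun x => Real.log (Real.cosh x)) (Real.sinh x / Real.cosh x) x :=
      (Real.hasDerivAt_cosh x).log (Real.cosh_pos x).ne'
    have h3 : HasDerivAt F (k*(2*x) - Real.sinh x / Real.cosh x) x := h1.sub h2
    rw [Real.tanh_eq_sinh_div_cosh]
    convert h3 using 1
    ring
  have hdiff : Differentiable ℝ F := fun x => (hder x).differentiableAt
  have hderiv : ∀ x, deriv F x = 2*k*x - Real.tanh x := fun x => (hder x).deriv
  have hkx : ∀ x : ℝ, 2*k*x = Real.tanh c * x / c := by
    intro x; rw [hk]; field_simp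
  rcases le_total u c with h | h
  · have hanti : AntitoneOn F (Set.Icc 0 c) := by
      apply antitoneOn_of_deriv_nonpos (convex_Icc 0 c) hdiff.continuous.continuousOn
        hdiff.differentiableOn
      intro x hx
      rw [interior_Icc, mem_Ioo] at hx
      rw [hderiv, hkx, sub_nonpos, div_le_iff₀ hc]
      have hb := tanh_mul_le hx.1.le hx.2.le
      linarith
    exact hanti ⟨hu, h⟩ ⟨hc.le, le_refl c⟩ h
  · have hmono : MonotoneOn F (Set.Ici c) := by
      apply monotoneOn_of_deriv_nonneg (convex_Ici c) hdiff.continuous.continuousOn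
        hdiff.differentiableOn
      intro x hx
      rw [interior_Ici, mem_Ioi] at hx
      rw [hderiv, hkx, sub_nonneg, le_div_iff₀ hc]
      have hb := tanh_mul_le hc.le hx.le
      linarith
    exact hmono (le_refl c) h h

private lemma core_pos {c : ℝ} (hc : 0 < c) (u : ℝ) :
    Real.exp u + Real.exp (-u) ≤
      (Real.exp c + Real.exp (-c)) * Real.exp (Real.tanh c/(2*c) * (u^2 - c^2)) := by
  wlog hu : 0 ≤ u generalizing u
  · have h := this (-u) (by linarith)
    rw [neg_neg, neg_sq] at h
    linarith
  · have h := core_nonneg hc hu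
    have h2 : Real.log (Real.cosh u) ≤
        Real.log (Real.cosh c) + Real.tanh c/(2*c)*(u^2 - c^2) := by
      have he : Real.tanh c/(2*c)*(u^2 - c^2)
          = Real.tanh c/(2*c)*u^2 - Real.tanh c/(2*c)*c^2 := by ring
      linarith
    have h3 : Real.cosh u ≤ Real.cosh c * Real.exp (Real.tanh c/(2*c)*(u^2 - c^2)) := by
      calc Real.cosh u = Real.exp (Real.log (Real.cosh u)) :=
            (Real.exp_log (Real.cosh_pos u)).symm
        _ ≤ Real.exp (Real.log (Real.cosh c) + Real.tanh c/(2*c)*(u^2 - c^2)) :=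
            Real.exp_le_exp.2 h2
        _ = Real.cosh c * Real.exp (Real.tanh c/(2*c)*(u^2 - c^2)) := by
            rw [Real.exp_add, Real.exp_log (Real.cosh_pos c)]
    rw [Real.cosh_eq, Real.cosh_eq] at h3
    nlinarith [h3]

private lemma core_ne {c : ℝ} (hc : c ≠ 0) (u : ℝ) :
    Real.exp u + Real.exp (-u) ≤
      (Real.exp c + Real.exp (-c)) * Real.exp (Real.tanh c/(2*c) * (u^2 - c^2)) := by
  rcases hc.lt_or_gt with h | h
  · have h2 := core_pos (neg_pos.2 h) u
    rw [Real.tanh_neg, show (2:ℝ)*(-c) = -(2*c) by ring, neg_div_neg_eq, neg_neg, neg_sq] at h2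
    linarith
  · exact core_pos h u

private lemma tanh_log_div {p : ℝ} (hp : 0 < p) (hp1 : p < 1) :
    Real.tanh ((Real.log p - Real.log (1-p))/2) = 2*p - 1 := by
  have hq : 0 < 1 - p := by linarith
  set c := (Real.log p - Real.log (1-p))/2 with hcdef
  have hE : Real.exp c * Real.exp c * (1-p) = p := by
    rw [← Real.exp_add, show c + c = Real.log p - Real.log (1-p) by rw [hcdef]; ring,
      Real.exp_sub, Real.exp_log hp, Real.exp_log hq]
    field_simp
  have hEpos := Real.exp_pos c
  rw [Real.tanh_eq_sinh_div_cosh, Real.sinh_eq, Real.cosh_eq, Real.exp_neg]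
  have hden : (0:ℝ) < Real.exp c + (Real.exp c)⁻¹ := by positivity
  field_simp
  linear_combination 2*hE

/-- Subgaussian bound for the centered Bernoulli distribution: for `0 < p < 1`, `q = 1 - p`,
`p ≠ q`, one has `p e^{qt} + q e^{-pt} ≤ e^{σ² t²/2}` for all `t`, with
`σ² = (p - q)/(2(log p - log q))`, and equality holds at `t₀ = -2(log p - log q)`. -/
theorem bernoulli_subgaussian_constant (p : ℝ) (hp : 0 < p) (hp1 : p < 1) (hpq : p ≠ 1 - p) :
    (∀ t : ℝ, p * Real.exp ((1 - p) * t) + (1 - p) * Real.exp (-p * t)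
        ≤ Real.exp ((p - (1 - p)) / (2 * (Real.log p - Real.log (1 - p))) * t ^ 2 / 2)) ∧
    p * Real.exp ((1 - p) * (-2 * (Real.log p - Real.log (1 - p)))) +
        (1 - p) * Real.exp (-p * (-2 * (Real.log p - Real.log (1 - p))))
      = Real.exp ((p - (1 - p)) / (2 * (Real.log p - Real.log (1 - p))) *
          (-2 * (Real.log p - Real.log (1 - p))) ^ 2 / 2) := by
  have hq : 0 < 1 - p := by linarith
  have hD : Real.log p - Real.log (1 - p) ≠ 0 := by
    intro h
    apply hpq
    calc p = Real.exp (Real.log p) := (Real.exp_log hp).symm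
      _ = Real.exp (Real.log (1 - p)) := by rw [show Real.log p = Real.log (1-p) by linarith]
      _ = 1 - p := Real.exp_log hq
  have hmp : ∀ a : ℝ, p * Real.exp a = Real.exp (Real.log p + a) := fun a => by
    rw [Real.exp_add, Real.exp_log hp]
  have hmq : ∀ a : ℝ, (1 - p) * Real.exp a = Real.exp (Real.log (1 - p) + a) := fun a => by
    rw [Real.exp_add, Real.exp_log hq]
  have hsum : Real.exp ((Real.log p - Real.log (1-p))/2)
      + Real.exp (-((Real.log p - Real.log (1-p))/2))
      = Real.exp (-(Real.log p + Real.log (1-p))/2) := by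
    have hpos := Real.exp_pos ((Real.log p + Real.log (1-p))/2)
    have h1 : Real.exp ((Real.log p - Real.log (1-p))/2)
        * Real.exp ((Real.log p + Real.log (1-p))/2) = p := by
      rw [← Real.exp_add, show (Real.log p - Real.log (1-p))/2
        + (Real.log p + Real.log (1-p))/2 = Real.log p by ring]
      exact Real.exp_log hp
    have h2 : Real.exp (-((Real.log p - Real.log (1-p))/2))
        * Real.exp ((Real.log p + Real.log (1-p))/2) = 1 - p := by
      rw [← Real.exp_add, show -((Real.log p - Real.log (1-p))/2)
        + (Real.log p + Real.log (1-p))/2 = Real.log (1-p) by ring]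
      exact Real.exp_log hq
    have h3 : Real.exp (-(Real.log p + Real.log (1-p))/2)
        * Real.exp ((Real.log p + Real.log (1-p))/2) = 1 := by
      rw [← Real.exp_add, show -(Real.log p + Real.log (1-p))/2
        + (Real.log p + Real.log (1-p))/2 = 0 by ring, Real.exp_zero]
    have h4 : (Real.exp ((Real.log p - Real.log (1-p))/2)
        + Real.exp (-((Real.log p - Real.log (1-p))/2)))
        * Real.exp ((Real.log p + Real.log (1-p))/2) = 1 := by
      rw [add_mul, h1, h2]; ring
    exact mul_right_cancel₀ hpos.ne' (h4.trans h3.symm)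
  constructor
  · intro t
    have hc : (Real.log p - Real.log (1-p))/2 ≠ 0 := div_ne_zero hD two_ne_zero
    have key := core_ne hc ((t + (Real.log p - Real.log (1-p)))/2)
    have hk : Real.tanh ((Real.log p - Real.log (1-p))/2)
        / (2*((Real.log p - Real.log (1-p))/2))
        = (2*p-1)/(Real.log p - Real.log (1-p)) := by
      rw [tanh_log_div hp hp1]
      congr 1
      ring
    rw [hk] at key
    calc p * Real.exp ((1 - p) * t) + (1 - p) * Real.exp (-p * t)
        = Real.exp ((p * Real.log p + (1-p) * Real.log (1-p)
              - (2*p-1) * ((t + (Real.log p - Real.log (1-p)))/2))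
              + (t + (Real.log p - Real.log (1-p)))/2)
          + Real.exp ((p * Real.log p + (1-p) * Real.log (1-p)
              - (2*p-1) * ((t + (Real.log p - Real.log (1-p)))/2))
              - (t + (Real.log p - Real.log (1-p)))/2) := by
          rw [hmp, hmq]
          congr 1
          · rw [Real.exp_eq_exp]; ring
          · rw [Real.exp_eq_exp]; ring
      _ = Real.exp (p * Real.log p + (1-p) * Real.log (1-p)
              - (2*p-1) * ((t + (Real.log p - Real.log (1-p)))/2))
          * (Real.exp ((t + (Real.log p - Real.log (1-p)))/2)
            + Real.exp (-((t + (Real.log p - Real.log (1-p)))/2))) := by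
          rw [mul_add, ← Real.exp_add, ← Real.exp_add]
          ring_nf
      _ ≤ Real.exp (p * Real.log p + (1-p) * Real.log (1-p)
              - (2*p-1) * ((t + (Real.log p - Real.log (1-p)))/2))
          * ((Real.exp ((Real.log p - Real.log (1-p))/2)
              + Real.exp (-((Real.log p - Real.log (1-p))/2)))
            * Real.exp ((2*p-1)/(Real.log p - Real.log (1-p))
                * (((t + (Real.log p - Real.log (1-p)))/2)^2
                  - ((Real.log p - Real.log (1-p))/2)^2))) :=
          mul_le_mul_of_nonneg_left key (Real.exp_pos _).le
      _ = Real.exp ((p * Real.log p + (1-p) * Real.log (1-p)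
              - (2*p-1) * ((t + (Real.log p - Real.log (1-p)))/2))
              + (2*p-1)/(Real.log p - Real.log (1-p))
                * (((t + (Real.log p - Real.log (1-p)))/2)^2
                  - ((Real.log p - Real.log (1-p))/2)^2)
              + (-(Real.log p + Real.log (1-p))/2)) := by
          rw [hsum, ← Real.exp_add, ← Real.exp_add, Real.exp_eq_exp]
          ring
      _ = Real.exp ((p - (1 - p)) / (2 * (Real.log p - Real.log (1 - p))) * t ^ 2 / 2) := by
          rw [Real.exp_eq_exp]
          field_simp
          ring
  · rw [hmp, hmq, show Real.log p + (1 - p) * (-2 * (Real.log p - Real.log (1 - p)))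
        = Real.log (1-p) + (2*p-1) * (Real.log p - Real.log (1-p)) by ring,
      show Real.log (1-p) + -p * (-2 * (Real.log p - Real.log (1 - p)))
        = Real.log p + (2*p-1) * (Real.log p - Real.log (1-p)) by ring,
      Real.exp_add, Real.exp_add, Real.exp_log hp, Real.exp_log hq,
      show (p - (1 - p)) / (2 * (Real.log p - Real.log (1 - p))) *
          (-2 * (Real.log p - Real.log (1 - p))) ^ 2 / 2
        = (2*p-1) * (Real.log p - Real.log (1-p)) by field_simp; ring]
    ring
end

section
/- Let X be a random variable with density p such that ∫ p(x)² e^{x²/2} dx < ∞. Then the characteristic function f(t) = E e^{itX} extends to an entire function and satisfies f(t) = e^{-t²/2} Σ_{k≥0} (E H_k(X)/k!) (it)^k for all complex t. -/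
open MeasureTheory Complex Polynomial Finset
open scoped Nat


lemma aux_choose_le (n k : ℕ) : n.choose k ≤ 2 ^ n := by
  rcases le_or_gt k n with h | h
  · calc n.choose k ≤ ∑ m ∈ range (n+1), n.choose m :=
        Finset.single_le_sum (fun i _ => Nat.zero_le _) (by simp [Nat.lt_succ_of_le h])
      _ = 2 ^ n := Nat.sum_range_choose n
  · simp [Nat.choose_eq_zero_of_lt h]

lemma aux_dfact (c : ℕ) : 2 ^ c * c.factorial * (2 * c - 1)‼ = (2 * c).factorial := by
  cases c with
  | zero => simp
  | succ m =>
    have h2 : 2 * (m + 1) - 1 = 2 * m + 1 := by omega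
    have h3 := Nat.factorial_eq_mul_doubleFactorial (2 * m + 1)
    have h4 := Nat.doubleFactorial_two_mul (m + 1)
    rw [h2, show 2 * (m+1) = (2*m+1)+1 by ring, h3, ← show 2 * (m+1) = (2*m+1)+1 by ring, h4]

lemma aux_nat (c a : ℕ) :
    ((2 * c - 1)‼ * (2 * c + a).choose a) ^ 2 * 4 ^ a * a.factorial
      ≤ 8 ^ (2 * c + a) * (2 * c + a).factorial := by
  set k := 2 * c + a with hk
  have hle : a ≤ k := by omega
  have hmul : k.choose a * a.factorial * (2*c).factorial = k.factorial := by
    have := Nat.choose_mul_factorial_mul_factorial hle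
    rwa [show k - a = 2 * c by omega] at this
  have hcb : (2*c).factorial ≤ 4 ^ c * (c.factorial * c.factorial) := by
    have h1 : (2*c).choose c * (c.factorial * c.factorial) = (2*c).factorial := by
      have := Nat.choose_mul_factorial_mul_factorial (show c ≤ 2*c by omega)
      rwa [show 2*c - c = c by omega, mul_assoc] at this
    calc (2*c).factorial = (2*c).choose c * (c.factorial * c.factorial) := h1.symm
      _ ≤ 4 ^ c * (c.factorial * c.factorial) := by
          apply Nat.mul_le_mul_right
          calc (2*c).choose c ≤ 2 ^ (2*c) := aux_choose_le _ _
            _ = 4 ^ c := by rw [pow_mul]; norm_num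
  have key : (((2 * c - 1)‼ * k.choose a) ^ 2 * 4 ^ a * a.factorial) * (2 ^ c * c.factorial)^2
      ≤ (8 ^ k * k.factorial) * (2 ^ c * c.factorial)^2 := by
    have e1 : (((2 * c - 1)‼ * k.choose a) ^ 2 * 4 ^ a * a.factorial) * (2 ^ c * c.factorial)^2
        = (k.choose a * ((2*c).factorial) ) * (k.choose a * a.factorial * (2*c).factorial) * 4 ^ a := by
      rw [← aux_dfact c]; ring
    rw [e1, hmul]
    calc (k.choose a * (2*c).factorial) * k.factorial * 4 ^ a
        ≤ (2 ^ k * (4 ^ c * (c.factorial * c.factorial))) * k.factorial * 4 ^ a := by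
          apply Nat.mul_le_mul_right; apply Nat.mul_le_mul_right
          exact Nat.mul_le_mul (aux_choose_le _ _) hcb
      _ ≤ (2 ^ k * (4 ^ c * (c.factorial * c.factorial))) * k.factorial * 4 ^ k := by
          apply Nat.mul_le_mul_left; exact Nat.pow_le_pow_right (by norm_num) hle
      _ = (8 ^ k * k.factorial) * (2 ^ c * c.factorial)^2 := by
          simp only [show (4:ℕ) = 2*2 from rfl, show (8:ℕ) = 2*(2*2) from rfl, mul_pow]
          ring
  have hpos : 0 < (2 ^ c * c.factorial)^2 :=
    Nat.pow_pos (Nat.mul_pos (Nat.pow_pos (by norm_num)) c.factorial_pos)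
  exact Nat.le_of_mul_le_mul_right key hpos

lemma aux_coeff_sq (k n : ℕ) :
    (((hermite k).coeff n : ℝ)) ^ 2 * 4 ^ n * n.factorial ≤ 8 ^ k * k.factorial := by
  rcases le_or_gt n k with hle | hlt
  · by_cases hpar : Even (k + n)
    · obtain ⟨c, hc⟩ : ∃ c, k = 2 * c + n := by
        rw [Nat.even_add, ← Nat.even_sub hle] at hpar
        obtain ⟨m, hm⟩ := hpar; exact ⟨m, by omega⟩
      subst hc
      rw [Polynomial.coeff_hermite_explicit]
      have := aux_nat c n
      have hcast : ((((-1:ℤ) ^ c * (2*c-1)‼ * (2*c+n).choose n : ℤ) : ℝ)) ^ 2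
          = (((2 * c - 1)‼ * (2 * c + n).choose n : ℕ) : ℝ) ^ 2 := by
        push_cast; ring_nf; rw [mul_comm c 2, pow_mul]; norm_num
      rw [hcast]
      exact_mod_cast this
    · rw [Polynomial.coeff_hermite_of_odd_add (Nat.odd_iff.mpr (by
        rcases Nat.even_or_odd (k+n) with h | h
        · exact absurd h hpar
        · exact Nat.odd_iff.mp h))]
      simp only [Int.cast_zero]
      norm_num
  · rw [Polynomial.coeff_hermite_of_lt hlt]
    simp only [Int.cast_zero]
    norm_num

lemma aux_coeff_bound (k n : ℕ) :
    |(((hermite k).coeff n : ℤ) : ℝ)| * 2 ^ n * Real.sqrt n.factorial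
      ≤ Real.sqrt (8 ^ k * k.factorial) := by
  have h1 : |(((hermite k).coeff n : ℤ) : ℝ)| * 2 ^ n * Real.sqrt n.factorial
      = Real.sqrt ((((hermite k).coeff n : ℤ) : ℝ) ^ 2 * 4 ^ n * n.factorial) := by
    rw [Real.sqrt_mul (by positivity), Real.sqrt_mul (sq_nonneg _), Real.sqrt_sq_eq_abs,
      show (4:ℝ) ^ n = ((2:ℝ) ^ n) ^ 2 by rw [← pow_mul, mul_comm, pow_mul]; norm_num,
      Real.sqrt_sq (by positivity)]
  rw [h1]
  exact Real.sqrt_le_sqrt (aux_coeff_sq k n)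

lemma aux_mono (p : ℝ → ℝ) (hp : ∀ x, 0 ≤ p x) (n : ℕ) (x : ℝ) :
    |x| ^ n * p x ≤ 2 ^ n * Real.sqrt n.factorial *
      (Real.exp (-(x ^ 2 / 4)) + (p x) ^ 2 * Real.exp (x ^ 2 / 2)) := by
  set s := Real.sqrt n.factorial with hs
  have hs0 : 0 < s := Real.sqrt_pos.mpr (by exact_mod_cast n.factorial_pos)
  have hss : s * s = n.factorial := Real.mul_self_sqrt (by positivity)
  set c : ℝ := 1 / (2 ^ n * s) with hc
  have hc0 : 0 < c := by positivity
  set u : ℝ := |x| ^ n * Real.exp (-(x ^ 2 / 4)) with hu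
  set w : ℝ := p x * Real.exp (x ^ 2 / 4) with hw
  have key : u * w ≤ c * u ^ 2 / 2 + w ^ 2 / (2 * c) := by
    rw [← sub_nonneg, show c * u ^ 2 / 2 + w ^ 2 / (2 * c) - u * w
      = (c * u - w) ^ 2 / (2 * c) by field_simp; ring]
    positivity
  have huw : u * w = |x| ^ n * p x := by
    rw [hu, hw]
    have : Real.exp (-(x ^ 2 / 4)) * Real.exp (x ^ 2 / 4) = 1 := by
      rw [← Real.exp_add]; norm_num
    calc |x| ^ n * Real.exp (-(x ^ 2 / 4)) * (p x * Real.exp (x ^ 2 / 4))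
        = |x| ^ n * p x * (Real.exp (-(x ^ 2 / 4)) * Real.exp (x ^ 2 / 4)) := by ring
      _ = |x| ^ n * p x := by rw [this, mul_one]
  have hu2 : u ^ 2 ≤ 4 ^ n * n.factorial * Real.exp (-(x ^ 2 / 4)) := by
    have h1 : u ^ 2 = (x ^ 2) ^ n * Real.exp (-(x ^ 2 / 2)) := by
      rw [hu, mul_pow, ← pow_mul, mul_comm n 2, pow_mul, _root_.sq_abs, pow_two (Real.exp _),
        ← Real.exp_add]
      ring_nf
    have h2 : (x ^ 2) ^ n ≤ 4 ^ n * n.factorial * Real.exp (x ^ 2 / 4) := by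
      have h3 := Real.pow_div_factorial_le_exp (x := x ^ 2 / 4) (by positivity) n
      have h4 : (x ^ 2) ^ n = 4 ^ n * (x ^ 2 / 4) ^ n := by
        rw [div_pow, ← mul_div_assoc]
        field_simp
      rw [h4]
      calc 4 ^ n * (x ^ 2 / 4) ^ n ≤ 4 ^ n * (n.factorial * Real.exp (x ^ 2 / 4)) := by
            apply mul_le_mul_of_nonneg_left _ (by positivity)
            rw [div_le_iff₀ (by positivity)] at h3
            linarith [h3]
        _ = 4 ^ n * n.factorial * Real.exp (x ^ 2 / 4) := by ring
    rw [h1]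
    have h5 : Real.exp (x ^ 2 / 4) * Real.exp (-(x ^ 2 / 2)) = Real.exp (-(x ^ 2 / 4)) := by
      rw [← Real.exp_add]; ring_nf
    calc (x ^ 2) ^ n * Real.exp (-(x ^ 2 / 2))
        ≤ (4 ^ n * n.factorial * Real.exp (x ^ 2 / 4)) * Real.exp (-(x ^ 2 / 2)) := by
          apply mul_le_mul_of_nonneg_right h2 (Real.exp_nonneg _)
      _ = 4 ^ n * n.factorial * (Real.exp (x ^ 2 / 4) * Real.exp (-(x ^ 2 / 2))) := by ring
      _ = 4 ^ n * n.factorial * Real.exp (-(x ^ 2 / 4)) := by rw [h5]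
  have hw2 : w ^ 2 = (p x) ^ 2 * Real.exp (x ^ 2 / 2) := by
    rw [hw, mul_pow, pow_two (Real.exp _), ← Real.exp_add]; ring_nf
  have hc4 : c * (4 ^ n * n.factorial) = 2 ^ n * s := by
    rw [hc]
    field_simp
    rw [show (4:ℝ) ^ n = 2 ^ n * 2 ^ n by rw [← mul_pow]; norm_num, ← hss]
    ring
  have h2c : 1 / (2 * c) = 2 ^ n * s / 2 := by
    rw [hc]; field_simp
  calc |x| ^ n * p x = u * w := huw.symm
    _ ≤ c * u ^ 2 / 2 + w ^ 2 / (2 * c) := key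
    _ ≤ c * (4 ^ n * n.factorial * Real.exp (-(x ^ 2 / 4))) / 2 + w ^ 2 / (2 * c) := by
        have := mul_le_mul_of_nonneg_left hu2 hc0.le
        linarith
    _ = 2 ^ n * s * Real.exp (-(x ^ 2 / 4)) / 2
        + 2 ^ n * s * ((p x) ^ 2 * Real.exp (x ^ 2 / 2)) / 2 := by
        rw [hw2]
        have e1 : c * (4 ^ n * (n.factorial : ℝ) * Real.exp (-(x ^ 2 / 4))) / 2
            = 2 ^ n * s * Real.exp (-(x ^ 2 / 4)) / 2 := by
          rw [← mul_assoc, hc4]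
        have e2 : p x ^ 2 * Real.exp (x ^ 2 / 2) / (2 * c)
            = 2 ^ n * s * (p x ^ 2 * Real.exp (x ^ 2 / 2)) / 2 := by
          rw [div_eq_mul_one_div, h2c]; ring
        rw [e1, e2]
    _ ≤ 2 ^ n * s * (Real.exp (-(x ^ 2 / 4)) + (p x) ^ 2 * Real.exp (x ^ 2 / 2)) := by
        have h6 : (0:ℝ) ≤ 2 ^ n * s := by positivity
        have h7 : (0:ℝ) ≤ Real.exp (-(x ^ 2 / 4)) := Real.exp_nonneg _
        have h8 : (0:ℝ) ≤ (p x) ^ 2 * Real.exp (x ^ 2 / 2) := by positivity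
        nlinarith

lemma aux_hermite_eval (k : ℕ) (x : ℝ) :
    (Polynomial.aeval x (hermite k) : ℝ)
      = ∑ n ∈ range (k + 1), (((hermite k).coeff n : ℤ) : ℝ) * x ^ n := by
  rw [Polynomial.aeval_def, Polynomial.eval₂_eq_eval_map,
    Polynomial.eval_eq_sum_range' (n := k + 1)]
  · exact Finset.sum_congr rfl fun n _ => by rw [Polynomial.coeff_map]; rfl
  · exact lt_of_le_of_lt Polynomial.natDegree_map_le
      (by rw [Polynomial.natDegree_hermite]; omega)

lemma aux_hermite_bound (p : ℝ → ℝ) (hp : ∀ x, 0 ≤ p x) (k : ℕ) (x : ℝ) :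
    |(Polynomial.aeval x (hermite k) : ℝ)| * p x
      ≤ (k + 1) * Real.sqrt (8 ^ k * k.factorial) *
        (Real.exp (-(x ^ 2 / 4)) + (p x) ^ 2 * Real.exp (x ^ 2 / 2)) := by
  set Φ : ℝ := Real.exp (-(x ^ 2 / 4)) + (p x) ^ 2 * Real.exp (x ^ 2 / 2) with hΦ
  have hΦ0 : 0 ≤ Φ := by positivity
  have h1 : |(Polynomial.aeval x (hermite k) : ℝ)|
      ≤ ∑ n ∈ range (k + 1), |(((hermite k).coeff n : ℤ) : ℝ)| * |x| ^ n := by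
    rw [aux_hermite_eval]
    refine le_trans (Finset.abs_sum_le_sum_abs _ _) ?_
    exact Finset.sum_le_sum fun n _ => by rw [_root_.abs_mul, _root_.abs_pow]
  calc |(Polynomial.aeval x (hermite k) : ℝ)| * p x
      ≤ (∑ n ∈ range (k + 1), |(((hermite k).coeff n : ℤ) : ℝ)| * |x| ^ n) * p x :=
        mul_le_mul_of_nonneg_right h1 (hp x)
    _ = ∑ n ∈ range (k + 1), |(((hermite k).coeff n : ℤ) : ℝ)| * (|x| ^ n * p x) := by
        rw [Finset.sum_mul]; exact Finset.sum_congr rfl fun n _ => by ring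
    _ ≤ ∑ n ∈ range (k + 1), Real.sqrt (8 ^ k * k.factorial) * Φ := by
        refine Finset.sum_le_sum fun n _ => ?_
        calc |(((hermite k).coeff n : ℤ) : ℝ)| * (|x| ^ n * p x)
            ≤ |(((hermite k).coeff n : ℤ) : ℝ)| * (2 ^ n * Real.sqrt n.factorial * Φ) :=
              mul_le_mul_of_nonneg_left (aux_mono p hp n x) (abs_nonneg _)
          _ = |(((hermite k).coeff n : ℤ) : ℝ)| * 2 ^ n * Real.sqrt n.factorial * Φ := by ring
          _ ≤ Real.sqrt (8 ^ k * k.factorial) * Φ :=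
              mul_le_mul_of_nonneg_right (aux_coeff_bound k n) hΦ0
    _ = (k + 1) * Real.sqrt (8 ^ k * k.factorial) * Φ := by
        rw [Finset.sum_const, Finset.card_range]
        push_cast
        ring

lemma aux_summable (r : ℝ) (hr : 0 ≤ r) :
    Summable (fun k : ℕ => (k + 1) * Real.sqrt (8 ^ k * k.factorial) * r ^ k / k.factorial) := by
  have hg : Summable (fun k : ℕ => ((64 * r ^ 2) ^ k / k.factorial + (1/2) ^ k) / 2) := by
    apply Summable.div_const
    exact (Real.summable_pow_div_factorial (64 * r ^ 2)).add
      (summable_geometric_of_lt_one (by norm_num) (by norm_num))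
  refine Summable.of_nonneg_of_le (fun k => by positivity) (fun k => ?_) hg
  set u : ℝ := (64 * r ^ 2) ^ k / k.factorial with hu
  set v : ℝ := (1/2 : ℝ) ^ k with hv
  have hu0 : 0 ≤ u := by positivity
  have hv0 : 0 ≤ v := by positivity
  have h1 : ((k : ℝ) + 1) ≤ 2 ^ k := by exact_mod_cast Nat.succ_le_of_lt (Nat.lt_two_pow_self (n := k))
  have h2 : (2:ℝ) ^ k * Real.sqrt (8 ^ k * k.factorial)
      = Real.sqrt ((32:ℝ) ^ k * k.factorial) := by
    rw [show (32:ℝ) ^ k * k.factorial = ((2:ℝ)^k)^2 * (8 ^ k * k.factorial) by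
        rw [show ((2:ℝ)^k)^2 = 4^k by rw [← pow_mul, mul_comm, pow_mul]; norm_num,
          ← mul_assoc, ← mul_pow]; norm_num,
      Real.sqrt_mul (sq_nonneg _), Real.sqrt_sq (by positivity)]
  set a : ℝ := Real.sqrt ((32:ℝ) ^ k * k.factorial) * r ^ k / k.factorial with ha
  have ha0 : 0 ≤ a := by positivity
  have ha2 : a ^ 2 = u * v := by
    rw [ha, hu, hv, div_pow, mul_pow, Real.sq_sqrt (by positivity)]
    have hk0 : ((k.factorial : ℝ)) ≠ 0 := by exact_mod_cast k.factorial_pos.ne'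
    field_simp
    rw [mul_pow, show (64:ℝ) ^ k = 2 ^ k * 32 ^ k by rw [← mul_pow]; norm_num]
    have h12 : ((1:ℝ) / 2) ^ k * 2 ^ k = 1 := by rw [← mul_pow]; norm_num
    linear_combination (-(r ^ (k * 2) * 32 ^ k)) * h12
  have key : a ≤ (u + v) / 2 := by
    have : a = Real.sqrt u * Real.sqrt v := by
      rw [← Real.sqrt_mul hu0, ← ha2, Real.sqrt_sq ha0]
    rw [this]
    nlinarith [sq_nonneg (Real.sqrt u - Real.sqrt v), Real.sq_sqrt hu0, Real.sq_sqrt hv0,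
      Real.sqrt_nonneg u, Real.sqrt_nonneg v]
  calc ((k : ℝ) + 1) * Real.sqrt (8 ^ k * k.factorial) * r ^ k / k.factorial
      ≤ 2 ^ k * Real.sqrt (8 ^ k * k.factorial) * r ^ k / k.factorial := by
        gcongr
      _ = a := by rw [h2]
      _ ≤ (u + v) / 2 := key

lemma aux_genfun (x : ℝ) (s : ℂ) :
    HasSum (fun k : ℕ => ((Polynomial.aeval x (hermite k) : ℝ) : ℂ) * s ^ k / k.factorial)
      (Complex.exp (s * x - s ^ 2 / 2)) := by
  classical
  set f : ℕ → ℂ := fun n => ((x : ℂ) * s) ^ n / n.factorial with hfdef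
  set g : ℕ → ℂ := fun j => if Even j then (-s ^ 2 / 2) ^ (j / 2) / (j / 2).factorial else 0
    with hgdef
  have hf : HasSum f (Complex.exp ((x : ℂ) * s)) := by
    rw [Complex.exp_eq_exp_ℂ]
    exact NormedSpace.expSeries_div_hasSum_exp ((x : ℂ) * s)
  have hfn : Summable fun n => ‖f n‖ := by
    have : (fun n : ℕ => ‖f n‖) = fun n : ℕ => ‖(x : ℂ) * s‖ ^ n / n.factorial := by
      funext n
      simp [hfdef, norm_div, norm_pow, Complex.norm_natCast]
    rw [this]
    exact Real.summable_pow_div_factorial _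
  have h2inj : Function.Injective (fun m : ℕ => 2 * m) := fun a b h => by simpa using h
  have h2range : ∀ j ∉ Set.range (fun m : ℕ => 2 * m), g j = 0 := by
    intro j hj
    have : ¬ Even j := by
      intro ⟨m, hm⟩
      exact hj ⟨m, by simp [hm]; ring⟩
    simp [hgdef, this]
  have hcomp : (g ∘ fun m : ℕ => 2 * m) = fun m : ℕ => (-s ^ 2 / 2) ^ m / m.factorial := by
    funext m
    simp [hgdef, Nat.mul_div_cancel_left m (by norm_num : 0 < 2)]
  have hg : HasSum g (Complex.exp (-s ^ 2 / 2)) := by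
    rw [← Function.Injective.hasSum_iff h2inj h2range, hcomp]
    rw [Complex.exp_eq_exp_ℂ]
    exact NormedSpace.expSeries_div_hasSum_exp _
  have hgn : Summable fun j => ‖g j‖ := by
    rw [← Function.Injective.summable_iff h2inj (fun j hj => by rw [h2range j hj, norm_zero])]
    have : ((fun j => ‖g j‖) ∘ fun m : ℕ => 2 * m)
        = fun m : ℕ => ‖(-s ^ 2 / 2) ^ m / (m.factorial : ℂ)‖ := by
      funext m
      simp only [Function.comp_apply]
      rw [show g (2 * m) = (-s ^ 2 / 2) ^ m / m.factorial from congrFun hcomp m]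
    rw [this]
    have : (fun m : ℕ => ‖(-s ^ 2 / 2) ^ m / (m.factorial : ℂ)‖)
        = fun m : ℕ => ‖-s ^ 2 / 2‖ ^ m / m.factorial := by
      funext m; simp [norm_div, norm_pow, Complex.norm_natCast]
    rw [this]
    exact Real.summable_pow_div_factorial _
  -- Cauchy product
  have hprod : ((∑' n, f n) * ∑' n, g n) = ∑' n, ∑ kl ∈ antidiagonal n, f kl.1 * g kl.2 :=
    tsum_mul_tsum_eq_tsum_sum_antidiagonal_of_summable_norm hfn hgn
  have hS : Summable fun n => ∑ kl ∈ antidiagonal n, f kl.1 * g kl.2 :=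
    (summable_norm_sum_mul_antidiagonal_of_summable_norm hfn hgn).of_norm
  have hhs : HasSum (fun n => ∑ kl ∈ antidiagonal n, f kl.1 * g kl.2)
      (Complex.exp (s * x - s ^ 2 / 2)) := by
    have := hS.hasSum
    rwa [← hprod, hf.tsum_eq, hg.tsum_eq, ← Complex.exp_add,
      show (x : ℂ) * s + -s ^ 2 / 2 = s * x - s ^ 2 / 2 by ring] at this
  -- identify coefficients
  have hterm : ∀ n : ℕ, (∑ kl ∈ antidiagonal n, f kl.1 * g kl.2)
      = ((Polynomial.aeval x (hermite n) : ℝ) : ℂ) * s ^ n / n.factorial := by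
    intro n
    rw [Finset.Nat.sum_antidiagonal_eq_sum_range_succ_mk, aux_hermite_eval]
    push_cast
    rw [Finset.sum_mul, Finset.sum_div]
    refine Finset.sum_congr rfl fun a ha => ?_
    have haln : a ≤ n := Nat.lt_succ_iff.mp (Finset.mem_range.mp ha)
    by_cases hev : Even (n - a)
    · obtain ⟨c, hc⟩ := hev
      have hn : n = 2 * c + a := by omega
      have hcoeff : (hermite n).coeff a = (-1) ^ c * (2 * c - 1)‼ * (2 * c + a).choose a := by
        rw [hn]; exact coeff_hermite_explicit c a
      have hga : g (n - a) = (-s ^ 2 / 2) ^ c / c.factorial := by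
        have h1 : n - a = 2 * c := by omega
        simp only [hgdef, h1]
        rw [if_pos ⟨c, two_mul c⟩, Nat.mul_div_cancel_left c (by norm_num : 0 < 2)]
      rw [hga, hcoeff]
      have hfact : ((2 * c - 1)‼ * ((2 * c + a).choose a) * (2 ^ c * c.factorial * a.factorial) : ℕ)
          = (2 * c + a).factorial := by
        have h3 := Nat.choose_mul_factorial_mul_factorial (show a ≤ 2 * c + a by omega)
        rw [show 2 * c + a - a = 2 * c by omega] at h3
        calc (2 * c - 1)‼ * ((2 * c + a).choose a) * (2 ^ c * c.factorial * a.factorial)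
            = ((2 * c + a).choose a * a.factorial) * (2 ^ c * c.factorial * (2 * c - 1)‼) := by ring
          _ = ((2 * c + a).choose a * a.factorial) * (2 * c).factorial := by rw [aux_dfact]
          _ = (2 * c + a).factorial := by rw [← h3]
      simp only [hfdef]
      rw [hn]
      have hne1 : ((a.factorial : ℂ)) ≠ 0 := by exact_mod_cast a.factorial_pos.ne'
      have hne2 : ((c.factorial : ℂ)) ≠ 0 := by exact_mod_cast c.factorial_pos.ne'
      have hne3 : (((2 * c + a).factorial : ℂ)) ≠ 0 := by
        exact_mod_cast (2 * c + a).factorial_pos.ne'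
      have hne4 : ((2 : ℂ) ^ c) ≠ 0 := pow_ne_zero _ two_ne_zero
      have hs2 : (-s ^ 2 / 2 : ℂ) ^ c = (-1) ^ c * (s ^ 2) ^ c / 2 ^ c := by
        rw [div_pow, neg_pow]
      have hs3 : s ^ a * (s ^ 2) ^ c = s ^ (2 * c + a) := by
        rw [← pow_mul, ← pow_add, add_comm]
      have hC := congrArg (fun t : ℕ => (t : ℂ)) hfact
      push_cast at hC
      have hconst : ((2 * c - 1)‼ : ℂ) * ((2 * c + a).choose a : ℂ) / ((2 * c + a).factorial : ℂ)
          = 1 / (a.factorial * (2 ^ c * c.factorial)) := by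
        rw [div_eq_div_iff hne3 (mul_ne_zero hne1 (mul_ne_zero hne4 hne2)), one_mul, ← hC]
        ring
      push_cast
      rw [hs2]
      calc ((x : ℂ) * s) ^ a / a.factorial * ((-1) ^ c * (s ^ 2) ^ c / 2 ^ c / c.factorial)
          = (-1) ^ c * (x : ℂ) ^ a * (s ^ a * (s ^ 2) ^ c)
              * (1 / (a.factorial * (2 ^ c * c.factorial))) := by
            rw [mul_pow]; ring
        _ = (-1) ^ c * (x : ℂ) ^ a * s ^ (2 * c + a)
              * (((2 * c - 1)‼ : ℂ) * ((2 * c + a).choose a : ℂ)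
                  / ((2 * c + a).factorial : ℂ)) := by
            rw [hs3, ← hconst]
        _ = (-1) ^ c * ((2 * c - 1)‼ : ℂ) * ((2 * c + a).choose a : ℂ) * (x : ℂ) ^ a
              * s ^ (2 * c + a) / ((2 * c + a).factorial : ℂ) := by
            ring
    · have hodd : Odd (n + a) := by
        rcases Nat.even_or_odd (n + a) with h | h
        · exfalso
          apply hev
          rw [Nat.even_sub haln]
          rw [Nat.even_add] at h
          exact h
        · exact h
      have hcoeff : (hermite n).coeff a = 0 := coeff_hermite_of_odd_add hodd
      have hga : g (n - a) = 0 := by simp [hgdef, hev]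
      rw [hga, hcoeff]
      simp
  exact (funext hterm : _ = _) ▸ hhs

/-- If `X` has density `p` with `∫ p(x)² e^{x²/2} dx < ∞`, then its characteristic function
extends to an entire function `F` with `F(t) = e^{-t²/2} Σ_k (E H_k(X)/k!) (it)^k` on all
of `ℂ`, where `H_k` are the probabilists' Hermite polynomials. -/
theorem charFun_entire_hermite_expansion (p : ℝ → ℝ) (hpm : Measurable p)
    (hp : ∀ x, 0 ≤ p x) (hdens : (∫ x, p x) = 1)
    (hfin : Integrable (fun x => p x ^ 2 * Real.exp (x ^ 2 / 2))) :
    ∃ F : ℂ → ℂ, Differentiable ℂ F ∧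
      (∀ t : ℝ, F t = ∫ x : ℝ, Complex.exp (Complex.I * t * x) * ((p x : ℝ) : ℂ)) ∧
      (∀ t : ℂ, F t = Complex.exp (-t ^ 2 / 2) *
        ∑' k : ℕ, (((∫ x, (Polynomial.aeval x (Polynomial.hermite k) : ℝ) * p x : ℝ) : ℂ)
            / (k.factorial : ℂ)) * (Complex.I * t) ^ k) := by
  classical
  set Φ : ℝ → ℝ := fun x => Real.exp (-(x ^ 2 / 4)) + (p x) ^ 2 * Real.exp (x ^ 2 / 2) with hΦdef
  have hΦint : Integrable Φ := by
    apply Integrable.add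
    · exact (integrable_exp_neg_mul_sq (by norm_num : (0:ℝ) < 1/4)).congr
        (Filter.Eventually.of_forall fun x => by ring_nf)
    · exact hfin
  set CΦ : ℝ := ∫ x, Φ x with hCΦdef
  have hCΦ0 : 0 ≤ CΦ := integral_nonneg fun x => by positivity
  set B : ℕ → ℝ := fun k => (k + 1) * Real.sqrt (8 ^ k * k.factorial) with hBdef
  have hB0 : ∀ k, 0 ≤ B k := fun k => by positivity
  set H : ℕ → ℝ → ℝ := fun k x => (Polynomial.aeval x (hermite k) : ℝ) with hHdef
  have hHpw : ∀ k x, |H k x * p x| ≤ B k * Φ x := by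
    intro k x
    rw [abs_mul, _root_.abs_of_nonneg (hp x)]
    exact aux_hermite_bound p hp k x
  have hint : ∀ k, Integrable (fun x => H k x * p x) := by
    intro k
    refine Integrable.mono' (hΦint.const_mul (B k)) ?_ ?_
    · exact ((hermite k).continuous_aeval.aestronglyMeasurable.mul hpm.aestronglyMeasurable)
    · exact Filter.Eventually.of_forall fun x => by
        rw [Real.norm_eq_abs]; exact hHpw k x
  have hintabs : ∀ k, |∫ x, H k x * p x| ≤ B k * CΦ := by
    intro k
    calc |∫ x, H k x * p x| = ‖∫ x, H k x * p x‖ := (Real.norm_eq_abs _).symm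
      _ ≤ ∫ x, ‖H k x * p x‖ := norm_integral_le_integral_norm _
      _ ≤ B k * CΦ := by
          rw [hCΦdef, ← integral_const_mul]
          refine integral_mono (hint k).norm (hΦint.const_mul (B k)) fun x => ?_
          rw [Real.norm_eq_abs]; exact hHpw k x
  -- the entire function
  set G : ℂ → ℂ := fun z =>
    ∑' k : ℕ, (((∫ x, (Polynomial.aeval x (Polynomial.hermite k) : ℝ) * p x : ℝ) : ℂ)
      / (k.factorial : ℂ)) * (Complex.I * z) ^ k with hGdef
  refine ⟨fun z => Complex.exp (-z ^ 2 / 2) * G z, ?_, ?_, fun t => rfl⟩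
  · -- differentiability
    have hexp : Differentiable ℂ fun z : ℂ => Complex.exp (-z ^ 2 / 2) :=
      (((differentiable_pow 2).neg).div_const 2).cexp
    refine hexp.mul ?_
    intro z₀
    have hz₀ : z₀ ∈ Metric.ball (0:ℂ) (‖z₀‖ + 1) := by
      rw [Metric.mem_ball, dist_zero_right]; linarith
    refine DifferentiableOn.differentiableAt ?_ (Metric.isOpen_ball.mem_nhds hz₀)
    set R : ℝ := ‖z₀‖ + 1 with hRdef
    have hR0 : 0 ≤ R := by positivity
    refine differentiableOn_tsum_of_summable_norm
      (u := fun k => (B k * R ^ k / k.factorial) * CΦ)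
      (((aux_summable R hR0).mul_right CΦ).congr (fun k => by rw [hBdef])) ?_
      Metric.isOpen_ball ?_
    · intro k
      exact ((differentiable_const _).mul
        ((differentiable_id.const_mul Complex.I).pow k)).differentiableOn
    · intro k w hw
      have hwR : ‖w‖ ≤ R := by
        rw [Metric.mem_ball, dist_zero_right] at hw; exact hw.le
      have h1 : ‖(((∫ x, (Polynomial.aeval x (Polynomial.hermite k) : ℝ) * p x : ℝ) : ℂ)
          / (k.factorial : ℂ)) * (Complex.I * w) ^ k‖
          = |∫ x, H k x * p x| / k.factorial * ‖w‖ ^ k := by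
        rw [norm_mul, norm_div, norm_pow, norm_mul, Complex.norm_I, one_mul,
          Complex.norm_real, Complex.norm_natCast, Real.norm_eq_abs]
      rw [h1]
      have hA : |∫ x, H k x * p x| / k.factorial ≤ (B k * CΦ) / k.factorial := by
        gcongr
        exact hintabs k
      have hB' : ‖w‖ ^ k ≤ R ^ k := pow_le_pow_left₀ (norm_nonneg _) hwR k
      calc |∫ x, H k x * p x| / k.factorial * ‖w‖ ^ k
          ≤ (B k * CΦ) / k.factorial * R ^ k :=
            mul_le_mul hA hB' (by positivity) (by positivity)
        _ = B k * R ^ k / k.factorial * CΦ := by ring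
  · -- value on the reals
    intro t
    set s : ℂ := Complex.I * t with hsdef
    have hs2 : s ^ 2 = -(((t:ℝ):ℂ) ^ 2) := by
      rw [hsdef, mul_pow, Complex.I_sq]; ring
    set Fk : ℕ → ℝ → ℂ := fun k x => ((H k x * p x : ℝ) : ℂ) * (s ^ k / k.factorial) with hFkdef
    have hFint : ∀ k, Integrable (Fk k) := fun k => ((hint k).ofReal).mul_const _
    have hFnorm : ∀ k, (∫ x, ‖Fk k x‖) ≤ (B k * |t| ^ k / k.factorial) * CΦ := by
      intro k
      have h1 : ∀ x : ℝ, ‖Fk k x‖ = |H k x * p x| * (|t| ^ k / k.factorial) := by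
        intro x
        rw [hFkdef]
        rw [norm_mul, Complex.norm_real, Real.norm_eq_abs, norm_div, norm_pow, hsdef,
          norm_mul, Complex.norm_I, one_mul, Complex.norm_real, Real.norm_eq_abs,
          Complex.norm_natCast]
      calc (∫ x, ‖Fk k x‖) = (∫ x, |H k x * p x|) * (|t| ^ k / k.factorial) := by
            rw [← integral_mul_const]
            exact integral_congr_ae (Filter.Eventually.of_forall h1)
        _ ≤ (B k * CΦ) * (|t| ^ k / k.factorial) := by
            refine mul_le_mul_of_nonneg_right ?_ (by positivity)
            calc (∫ x, |H k x * p x|) = ∫ x, ‖H k x * p x‖ := by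
                  simp only [Real.norm_eq_abs]
              _ ≤ B k * CΦ := by
                  rw [hCΦdef, ← integral_const_mul]
                  refine integral_mono (hint k).norm (hΦint.const_mul (B k)) fun x => ?_
                  rw [Real.norm_eq_abs]; exact hHpw k x
        _ = (B k * |t| ^ k / k.factorial) * CΦ := by ring
    have hFsum : Summable fun k => ∫ x, ‖Fk k x‖ := by
      refine Summable.of_nonneg_of_le (fun k => integral_nonneg fun x => norm_nonneg _)
        (fun k => hFnorm k) ?_
      exact ((aux_summable |t| (abs_nonneg t)).mul_right CΦ).congr (fun k => by rw [hBdef])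
    have hswap := hasSum_integral_of_summable_integral_norm (μ := volume) hFint hFsum
    have hpt : ∀ x : ℝ, (∑' k, Fk k x) = Complex.exp (s * x - s ^ 2 / 2) * ((p x : ℝ) : ℂ) := by
      intro x
      have h2 := (aux_genfun x s).mul_right ((p x : ℝ) : ℂ)
      have h3 : (fun k : ℕ => ((Polynomial.aeval x (hermite k) : ℝ) : ℂ) * s ^ k / k.factorial
          * ((p x : ℝ) : ℂ)) = fun k => Fk k x := by
        funext k
        rw [hFkdef]
        push_cast
        ring
      rw [h3] at h2
      exact h2.tsum_eq
    have hIk : ∀ k, (∫ x, Fk k x)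
        = (((∫ x, H k x * p x : ℝ)) : ℂ) * (s ^ k / k.factorial) := by
      intro k
      rw [hFkdef]
      rw [integral_mul_const]
      congr 1
      exact integral_ofReal
    have h5 : (∫ x, ∑' k, Fk k x)
        = Complex.exp (((t : ℝ) : ℂ) ^ 2 / 2)
            * ∫ x : ℝ, Complex.exp (Complex.I * t * x) * ((p x : ℝ) : ℂ) := by
      rw [integral_congr_ae (Filter.Eventually.of_forall hpt), ← integral_const_mul]
      refine integral_congr_ae (Filter.Eventually.of_forall fun x => ?_)
      beta_reduce
      rw [show s * (x : ℂ) - s ^ 2 / 2 = ((t : ℝ) : ℂ) ^ 2 / 2 + s * x by rw [hs2]; ring,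
        Complex.exp_add, hsdef]
      ring
    have hG : G t = Complex.exp (((t : ℝ) : ℂ) ^ 2 / 2)
        * ∫ x : ℝ, Complex.exp (Complex.I * t * x) * ((p x : ℝ) : ℂ) := by
      rw [hGdef]
      beta_reduce
      have h6 : (fun k : ℕ =>
          (((∫ x, (Polynomial.aeval x (Polynomial.hermite k) : ℝ) * p x : ℝ) : ℂ)
            / (k.factorial : ℂ)) * (Complex.I * (t : ℂ)) ^ k) = fun k => ∫ x, Fk k x := by
        funext k
        rw [hIk k, ← hsdef]
        ring
      rw [h6, hswap.tsum_eq, h5]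
    show Complex.exp (-((t : ℝ) : ℂ) ^ 2 / 2) * G t = _
    rw [hG, ← mul_assoc, ← Complex.exp_add,
      show -((t : ℝ) : ℂ) ^ 2 / 2 + ((t : ℝ) : ℂ) ^ 2 / 2 = 0 by ring, Complex.exp_zero, one_mul,
      hsdef]
end
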